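/- arXiv:1909.03419 — 2 statements merged into one kernel-verified Lean document; each statement's English description precedes it below -/
import Mathlib

section
/- Assume ξ_i ≥ 0, ξ_j ≥ 0, ξ_k ≥ 0. For all positive reals r_i, r_j, r_k, the Euclidean inner angles satisfy 0 < ϑ_i < π − Θ_i, 0 < ϑ_j < π − Θ_j, 0 < ϑ_k < π − Θ_k, and ϑ_i + ϑ_j + ϑ_k = π. -/
/-- Euclidean side length of a three-circle configuration:
`eucLen I rj rk = √(rj² + rk² + 2·I·rj·rk)`. -/
noncomputable def eucLen (I rj rk : ℝ) : ℝ :=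
  Real.sqrt (rj ^ 2 + rk ^ 2 + 2 * I * rj * rk)

/-- The Euclidean inner angle `ϑ_i` at the center of the circle of radius `r_i`
in the three-circle configuration with radii `r_i, r_j, r_k` and cosines of
exterior intersection angles `I_i, I_j, I_k`.  The angles `ϑ_j, ϑ_k` are
obtained by cyclic permutation of the arguments. -/
noncomputable def eucAngle (Ii Ij Ik ri rj rk : ℝ) : ℝ :=
  Real.arccos ((eucLen Ij rk ri ^ 2 + eucLen Ik ri rj ^ 2 - eucLen Ii rj rk ^ 2) /
    (2 * eucLen Ij rk ri * eucLen Ik ri rj))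

open Real

set_option maxHeartbeats 1000000

private lemma sq_le_imp {a b : ℝ} (ha : 0 ≤ a) (hb : 0 ≤ b) (h : a ^ 2 ≤ b ^ 2) : a ≤ b := by
  nlinarith

private lemma eucLen_arg_pos {I rj rk : ℝ} (hI : -1 < I) (hrj : 0 < rj) (hrk : 0 < rk) :
    0 < rj ^ 2 + rk ^ 2 + 2 * I * rj * rk := by
  nlinarith [sq_nonneg (rj - rk), mul_pos hrj hrk]

private lemma eucLen_pos {I rj rk : ℝ} (hI : -1 < I) (hrj : 0 < rj) (hrk : 0 < rk) :
    0 < eucLen I rj rk :=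
  Real.sqrt_pos.2 (eucLen_arg_pos hI hrj hrk)

private lemma eucLen_sq {I rj rk : ℝ} (hI : -1 < I) (hrj : 0 < rj) (hrk : 0 < rk) :
    eucLen I rj rk ^ 2 = rj ^ 2 + rk ^ 2 + 2 * I * rj * rk :=
  Real.sq_sqrt (eucLen_arg_pos hI hrj hrk).le

/-- Case of the key inequality where `Ii > 0` and `rk + Ij * ri < 0`. -/
private lemma key_case_neg (Ii Ij Ik ri rj rk lj lk : ℝ)
    (hIi : -1 < Ii) (hIi1 : Ii ≤ 1) (hIj : -1 < Ij) (hIj1 : Ij ≤ 1)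
    (hIk : -1 < Ik) (hIk1 : Ik ≤ 1)
    (hξj : 0 ≤ Ij + Ik * Ii) (hξk : 0 ≤ Ik + Ii * Ij)
    (hri : 0 < ri) (hrj : 0 < rj) (hrk : 0 < rk)
    (hlj : 0 < lj) (hlk : 0 < lk)
    (hlj2 : lj ^ 2 = rk ^ 2 + ri ^ 2 + 2 * Ij * rk * ri)
    (hlk2 : lk ^ 2 = ri ^ 2 + rj ^ 2 + 2 * Ik * ri * rj)
    (hci : 0 < Ii) (hA : rk + Ij * ri < 0) :
    0 < ri ^ 2 + Ij * rk * ri + Ik * ri * rj - Ii * rj * rk + Ii * (lj * lk) := by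
  have hIjneg : Ij < 0 := by nlinarith
  have hIkpos : 0 < Ik := by nlinarith
  have hrik : rk < ri := by nlinarith
  have h1 : 0 < ri + Ij * rk := by nlinarith
  have h2 : 0 ≤ rj + Ik * ri := by nlinarith
  have hljge : ri + Ij * rk ≤ lj := by
    apply sq_le_imp h1.le hlj.le
    have : (0:ℝ) ≤ 1 - Ij ^ 2 := by nlinarith
    nlinarith [mul_nonneg (sq_nonneg rk) this]
  have hlkge : rj + Ik * ri ≤ lk := by
    apply sq_le_imp h2 hlk.le
    have : (0:ℝ) ≤ 1 - Ik ^ 2 := by nlinarith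
    nlinarith [mul_nonneg (sq_nonneg ri) this]
  have hp : Ii * ((ri + Ij * rk) * (rj + Ik * ri)) ≤ Ii * (lj * lk) :=
    mul_le_mul_of_nonneg_left (mul_le_mul hljge hlkge h2 hlj.le) hci.le
  have h3 : 0 < 1 + Ii * Ik := by nlinarith
  have e : ri ^ 2 + Ij * rk * ri + Ik * ri * rj - Ii * rj * rk +
      Ii * ((ri + Ij * rk) * (rj + Ik * ri)) =
      (1 + Ii * Ik) * (ri * (ri + Ij * rk)) +
        rj * (ri * (Ik + Ii) - rk * (Ii * (1 - Ij))) := by ring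
  have h4 : 0 < (1 + Ii * Ik) * (ri * (ri + Ij * rk)) :=
    mul_pos h3 (mul_pos hri h1)
  have h5 : 0 ≤ ri * (Ik + Ii) - rk * (Ii * (1 - Ij)) := by
    have h6 : rk * (Ik + Ii) ≤ ri * (Ik + Ii) :=
      mul_le_mul_of_nonneg_right hrik.le (by linarith)
    nlinarith [mul_nonneg hrk.le hξk]
  nlinarith [mul_nonneg hrj.le h5]

/-- The key inequality: `0 < A_i + Ii * lj * lk`. -/
private lemma key_ineq (Ii Ij Ik ri rj rk lj lk : ℝ)
    (hIi : -1 < Ii) (hIi1 : Ii ≤ 1) (hIj : -1 < Ij) (hIj1 : Ij ≤ 1)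
    (hIk : -1 < Ik) (hIk1 : Ik ≤ 1)
    (hξi : 0 ≤ Ii + Ij * Ik) (hξj : 0 ≤ Ij + Ik * Ii) (hξk : 0 ≤ Ik + Ii * Ij)
    (hri : 0 < ri) (hrj : 0 < rj) (hrk : 0 < rk)
    (hlj : 0 < lj) (hlk : 0 < lk)
    (hlj2 : lj ^ 2 = rk ^ 2 + ri ^ 2 + 2 * Ij * rk * ri)
    (hlk2 : lk ^ 2 = ri ^ 2 + rj ^ 2 + 2 * Ik * ri * rj) :
    0 < ri ^ 2 + Ij * rk * ri + Ik * ri * rj - Ii * rj * rk + Ii * (lj * lk) := by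
  rcases le_or_gt Ii 0 with hci | hci
  · -- `Ii ≤ 0`: then `Ij, Ik ≥ -Ii ≥ 0`, and we bound `lj ≤ ri + rk`, `lk ≤ ri + rj`.
    have hIj0 : 0 ≤ Ij := by
      nlinarith [mul_nonneg (neg_nonneg.2 hci) hξk, mul_pos (show (0:ℝ) < 1 - Ii by linarith)
        (show (0:ℝ) < 1 + Ii by linarith)]
    have hIk0 : 0 ≤ Ik := by
      nlinarith [mul_nonneg (neg_nonneg.2 hci) hξj, mul_pos (show (0:ℝ) < 1 - Ii by linarith)
        (show (0:ℝ) < 1 + Ii by linarith)]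
    have hIji : -Ii ≤ Ij := by nlinarith [mul_nonneg hIj0 (show (0:ℝ) ≤ 1 - Ik by linarith)]
    have hIki : -Ii ≤ Ik := by nlinarith [mul_nonneg hIk0 (show (0:ℝ) ≤ 1 - Ij by linarith)]
    have hljle : lj ≤ ri + rk := by
      apply sq_le_imp hlj.le (by positivity)
      nlinarith [mul_pos hrk hri]
    have hlkle : lk ≤ ri + rj := by
      apply sq_le_imp hlk.le (by positivity)
      nlinarith [mul_pos hri hrj]
    have hprod : lj * lk ≤ (ri + rk) * (ri + rj) :=
      mul_le_mul hljle hlkle hlk.le (by positivity)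
    have hp : Ii * ((ri + rk) * (ri + rj)) ≤ Ii * (lj * lk) :=
      mul_le_mul_of_nonpos_left hprod hci
    have e : ri ^ 2 + Ij * rk * ri + Ik * ri * rj - Ii * rj * rk +
        Ii * ((ri + rk) * (ri + rj)) =
        ri ^ 2 * (1 + Ii) + rk * ri * (Ij + Ii) + ri * rj * (Ik + Ii) := by ring
    nlinarith [mul_pos (mul_pos hri hri) (show (0:ℝ) < 1 + Ii by linarith),
      mul_nonneg (mul_pos hrk hri).le (show (0:ℝ) ≤ Ij + Ii by linarith),
      mul_nonneg (mul_pos hri hrj).le (show (0:ℝ) ≤ Ik + Ii by linarith)]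
  · -- `0 < Ii`.
    rcases lt_or_ge (rk + Ij * ri) 0 with hA | hA
    · exact key_case_neg Ii Ij Ik ri rj rk lj lk hIi hIi1 hIj hIj1 hIk hIk1 hξj hξk
        hri hrj hrk hlj hlk hlj2 hlk2 hci hA
    · rcases lt_or_ge (rj + Ik * ri) 0 with hB | hB
      · -- symmetric case, swap the roles of `j` and `k`
        have := key_case_neg Ii Ik Ij ri rk rj lk lj hIi hIi1 hIk hIk1 hIj hIj1
          (by nlinarith) (by nlinarith) hri hrk hrj hlk hlj (by linarith [hlk2]) 
          (by linarith [hlj2]) hci hB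
        nlinarith [this]
      · -- main case: both `rk + Ij * ri ≥ 0` and `rj + Ik * ri ≥ 0`.
        have hljge : rk + Ij * ri ≤ lj := by
          apply sq_le_imp hA hlj.le
          have : (0:ℝ) ≤ 1 - Ij ^ 2 := by nlinarith
          nlinarith [mul_nonneg (sq_nonneg ri) this]
        have hlkge : rj + Ik * ri ≤ lk := by
          apply sq_le_imp hB hlk.le
          have : (0:ℝ) ≤ 1 - Ik ^ 2 := by nlinarith
          nlinarith [mul_nonneg (sq_nonneg ri) this]
        have hp : Ii * ((rk + Ij * ri) * (rj + Ik * ri)) ≤ Ii * (lj * lk) :=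
          mul_le_mul_of_nonneg_left (mul_le_mul hljge hlkge hB hlj.le) hci.le
        have hP1 : Ij * Ik ≤ 1 := by nlinarith
        have hP2 : -1 < Ij * Ik := by nlinarith
        have h3 : 0 < 1 + Ii * (Ij * Ik) := by
          rcases le_or_gt 0 (Ij * Ik) with h | h
          · nlinarith
          · nlinarith [mul_le_mul_of_nonpos_right hIi1 h.le]
        have e : ri ^ 2 + Ij * rk * ri + Ik * ri * rj - Ii * rj * rk +
            Ii * ((rk + Ij * ri) * (rj + Ik * ri)) =
            ri ^ 2 * (1 + Ii * (Ij * Ik)) + rk * ri * (Ij + Ik * Ii) +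
              ri * rj * (Ik + Ii * Ij) := by ring
        nlinarith [mul_pos (mul_pos hri hri) h3,
          mul_nonneg (mul_pos hrk hri).le hξj, mul_nonneg (mul_pos hri hrj).le hξk]

/-- Strict nondegeneracy: `A_i² < lj² lk²` (a polynomial statement). -/
private lemma D_pos (Ii Ij Ik ri rj rk : ℝ)
    (hIi : -1 < Ii) (hIi1 : Ii ≤ 1) (hIj : -1 < Ij) (hIj1 : Ij ≤ 1)
    (hIk : -1 < Ik) (hIk1 : Ik ≤ 1)
    (hξi : 0 ≤ Ii + Ij * Ik) (hξj : 0 ≤ Ij + Ik * Ii) (hξk : 0 ≤ Ik + Ii * Ij)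
    (hri : 0 < ri) (hrj : 0 < rj) (hrk : 0 < rk) :
    (ri ^ 2 + Ij * rk * ri + Ik * ri * rj - Ii * rj * rk) ^ 2 <
      (rk ^ 2 + ri ^ 2 + 2 * Ij * rk * ri) * (ri ^ 2 + rj ^ 2 + 2 * Ik * ri * rj) := by
  have e : (rk ^ 2 + ri ^ 2 + 2 * Ij * rk * ri) * (ri ^ 2 + rj ^ 2 + 2 * Ik * ri * rj) -
      (ri ^ 2 + Ij * rk * ri + Ik * ri * rj - Ii * rj * rk) ^ 2 =
      ri ^ 2 * rj ^ 2 * (1 - Ik ^ 2) + rj ^ 2 * rk ^ 2 * (1 - Ii ^ 2) +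
        rk ^ 2 * ri ^ 2 * (1 - Ij ^ 2) + 2 * (ri ^ 2 * (rj * rk)) * (Ii + Ij * Ik) +
        2 * (rj ^ 2 * (rk * ri)) * (Ij + Ik * Ii) +
        2 * (rk ^ 2 * (ri * rj)) * (Ik + Ii * Ij) := by ring
  have t1 : 0 ≤ ri ^ 2 * rj ^ 2 * (1 - Ik ^ 2) := by
    apply mul_nonneg (by positivity); nlinarith
  have t3 : 0 ≤ rk ^ 2 * ri ^ 2 * (1 - Ij ^ 2) := by
    apply mul_nonneg (by positivity); nlinarith
  have t4 : 0 ≤ 2 * (ri ^ 2 * (rj * rk)) * (Ii + Ij * Ik) := by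
    apply mul_nonneg (by positivity) hξi
  have t5 : 0 ≤ 2 * (rj ^ 2 * (rk * ri)) * (Ij + Ik * Ii) := by
    apply mul_nonneg (by positivity) hξj
  have t6 : 0 ≤ 2 * (rk ^ 2 * (ri * rj)) * (Ik + Ii * Ij) := by
    apply mul_nonneg (by positivity) hξk
  rcases lt_or_eq_of_le hIi1 with h | h
  · have t2 : 0 < rj ^ 2 * rk ^ 2 * (1 - Ii ^ 2) := by
      apply mul_pos (by positivity); nlinarith
    linarith
  · have t2 : 0 ≤ rj ^ 2 * rk ^ 2 * (1 - Ii ^ 2) := by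
      apply mul_nonneg (by positivity); nlinarith
    have hP2 : -1 < Ij * Ik := by nlinarith
    have t4' : 0 < 2 * (ri ^ 2 * (rj * rk)) * (Ii + Ij * Ik) := by
      apply mul_pos (by positivity); nlinarith
    linarith

/-- Sum of the three Euclidean angles of a nondegenerate triangle is `π`,
stated for arbitrary positive side lengths. -/
private lemma triangle_sum (li lj lk : ℝ) (hli : 0 < li) (hlj : 0 < lj) (hlk : 0 < lk)
    (hD : ((lj ^ 2 + lk ^ 2 - li ^ 2) / 2) ^ 2 < lj ^ 2 * lk ^ 2) :
    arccos ((lj ^ 2 + lk ^ 2 - li ^ 2) / (2 * lj * lk)) +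
      arccos ((lk ^ 2 + li ^ 2 - lj ^ 2) / (2 * lk * li)) +
      arccos ((li ^ 2 + lj ^ 2 - lk ^ 2) / (2 * li * lj)) = π := by
  have hD' : 0 < lj ^ 2 * lk ^ 2 - ((lj ^ 2 + lk ^ 2 - li ^ 2) / 2) ^ 2 := by linarith
  set D := lj ^ 2 * lk ^ 2 - ((lj ^ 2 + lk ^ 2 - li ^ 2) / 2) ^ 2 with hDdef
  set qi := (lj ^ 2 + lk ^ 2 - li ^ 2) / (2 * lj * lk) with hqi
  set qj := (lk ^ 2 + li ^ 2 - lj ^ 2) / (2 * lk * li) with hqj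
  set qk := (li ^ 2 + lj ^ 2 - lk ^ 2) / (2 * li * lj) with hqk
  have hbi : qi ^ 2 < 1 := by
    rw [hqi, div_pow, div_lt_one (by positivity)]
    nlinarith [hD']
  have hbj : qj ^ 2 < 1 := by
    rw [hqj, div_pow, div_lt_one (by positivity)]
    nlinarith [hD']
  have hbk : qk ^ 2 < 1 := by
    rw [hqk, div_pow, div_lt_one (by positivity)]
    nlinarith [hD']
  have hqilt : qi < 1 := by nlinarith
  have hqigt : -1 < qi := by nlinarith
  have hqjlt : qj < 1 := by nlinarith
  have hqjgt : -1 < qj := by nlinarith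
  have hqklt : qk < 1 := by nlinarith
  have hqkgt : -1 < qk := by nlinarith
  have hci : Real.cos (arccos qi) = qi := Real.cos_arccos (by linarith) (by linarith)
  have hcj : Real.cos (arccos qj) = qj := Real.cos_arccos (by linarith) (by linarith)
  have hck : Real.cos (arccos qk) = qk := Real.cos_arccos (by linarith) (by linarith)
  have hsi : Real.sin (arccos qi) = Real.sqrt D / (lj * lk) := by
    rw [Real.sin_arccos]
    have e : (Real.sqrt D / (lj * lk)) ^ 2 = 1 - qi ^ 2 := by
      rw [div_pow, Real.sq_sqrt hD'.le, hDdef, hqi]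
      field_simp
    rw [← e, Real.sqrt_sq (by positivity)]
  have hsj : Real.sin (arccos qj) = Real.sqrt D / (lk * li) := by
    rw [Real.sin_arccos]
    have e : (Real.sqrt D / (lk * li)) ^ 2 = 1 - qj ^ 2 := by
      rw [div_pow, Real.sq_sqrt hD'.le, hDdef, hqj]
      field_simp
      ring
    rw [← e, Real.sqrt_sq (by positivity)]
  have hsk : Real.sin (arccos qk) = Real.sqrt D / (li * lj) := by
    rw [Real.sin_arccos]
    have e : (Real.sqrt D / (li * lj)) ^ 2 = 1 - qk ^ 2 := by
      rw [div_pow, Real.sq_sqrt hD'.le, hDdef, hqk]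
      field_simp
      ring
    rw [← e, Real.sqrt_sq (by positivity)]
  have hjpi : arccos qj < π :=
    lt_of_le_of_ne (Real.arccos_le_pi qj) fun h => by
      have := Real.arccos_eq_pi.1 h; linarith
  have hkpi : arccos qk < π :=
    lt_of_le_of_ne (Real.arccos_le_pi qk) fun h => by
      have := Real.arccos_eq_pi.1 h; linarith
  have hsum : arccos qj + arccos qk = π - arccos qi := by
    have hc : Real.cos (arccos qj + arccos qk) = Real.cos (π - arccos qi) := by
      have hprod : Real.sqrt D / (lk * li) * (Real.sqrt D / (li * lj)) =
          D / (lk * li * (li * lj)) := by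
        rw [div_mul_div_comm, Real.mul_self_sqrt hD'.le]
      rw [Real.cos_add, Real.cos_pi_sub, hci, hcj, hck, hsj, hsk, hprod, hDdef, hqi,
        hqj, hqk]
      field_simp
      ring
    have hs : Real.sin (arccos qj + arccos qk) = Real.sin (π - arccos qi) := by
      rw [Real.sin_add, Real.sin_pi_sub, hsi, hsj, hsk, hcj, hck, hqj, hqk]
      field_simp
      ring
    rcases le_or_gt (arccos qj + arccos qk) π with hle | hlt
    · exact Real.injOn_cos
        ⟨add_nonneg (Real.arccos_nonneg qj) (Real.arccos_nonneg qk), hle⟩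
        ⟨by linarith [Real.arccos_le_pi qi], by linarith [Real.arccos_nonneg qi]⟩ hc
    · exfalso
      have hx : 0 < Real.sin (arccos qj + arccos qk - π) :=
        Real.sin_pos_of_pos_of_lt_pi (by linarith) (by linarith)
      rw [Real.sin_sub_pi] at hx
      have hpos : 0 ≤ Real.sin (π - arccos qi) := by
        rw [Real.sin_pi_sub]
        exact Real.sin_nonneg_of_nonneg_of_le_pi (Real.arccos_nonneg qi)
          (Real.arccos_le_pi qi)
      rw [hs] at hx
      linarith
  linarith


private lemma one_angle (Θi Θj Θk : ℝ)
    (hi0 : 0 ≤ Θi) (hi1 : Θi < Real.pi)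
    (hj0 : 0 ≤ Θj) (hj1 : Θj < Real.pi)
    (hk0 : 0 ≤ Θk) (hk1 : Θk < Real.pi)
    (hξi : 0 ≤ Real.cos Θi + Real.cos Θj * Real.cos Θk)
    (hξj : 0 ≤ Real.cos Θj + Real.cos Θk * Real.cos Θi)
    (hξk : 0 ≤ Real.cos Θk + Real.cos Θi * Real.cos Θj)
    (ri rj rk : ℝ) (hri : 0 < ri) (hrj : 0 < rj) (hrk : 0 < rk) :
    0 < eucAngle (Real.cos Θi) (Real.cos Θj) (Real.cos Θk) ri rj rk ∧
      eucAngle (Real.cos Θi) (Real.cos Θj) (Real.cos Θk) ri rj rk < Real.pi - Θi := by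
  have hIi : -1 < Real.cos Θi := by
    have := Real.cos_lt_cos_of_nonneg_of_le_pi hi0 le_rfl hi1
    rwa [Real.cos_pi] at this
  have hIj : -1 < Real.cos Θj := by
    have := Real.cos_lt_cos_of_nonneg_of_le_pi hj0 le_rfl hj1
    rwa [Real.cos_pi] at this
  have hIk : -1 < Real.cos Θk := by
    have := Real.cos_lt_cos_of_nonneg_of_le_pi hk0 le_rfl hk1
    rwa [Real.cos_pi] at this
  have hIi1 := Real.cos_le_one Θi
  have hIj1 := Real.cos_le_one Θj
  have hIk1 := Real.cos_le_one Θk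
  have hli : 0 < eucLen (Real.cos Θi) rj rk := eucLen_pos hIi hrj hrk
  have hlj : 0 < eucLen (Real.cos Θj) rk ri := eucLen_pos hIj hrk hri
  have hlk : 0 < eucLen (Real.cos Θk) ri rj := eucLen_pos hIk hri hrj
  have hsqi := eucLen_sq hIi hrj hrk
  have hsqj := eucLen_sq hIj hrk hri
  have hsqk := eucLen_sq hIk hri hrj
  set li := eucLen (Real.cos Θi) rj rk
  set lj := eucLen (Real.cos Θj) rk ri
  set lk := eucLen (Real.cos Θk) ri rj
  set A := ri ^ 2 + Real.cos Θj * rk * ri + Real.cos Θk * ri * rj -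
    Real.cos Θi * rj * rk with hA
  have hP : 0 < lj * lk := mul_pos hlj hlk
  have hAngle : eucAngle (Real.cos Θi) (Real.cos Θj) (Real.cos Θk) ri rj rk =
      arccos (A / (lj * lk)) := by
    unfold eucAngle
    change arccos ((lj ^ 2 + lk ^ 2 - li ^ 2) / (2 * lj * lk)) = arccos (A / (lj * lk))
    congr 1
    rw [hsqi, hsqj, hsqk, hA]
    field_simp
    ring
  have hD2 : A ^ 2 < (lj * lk) ^ 2 := by
    rw [mul_pow, hsqj, hsqk, hA]
    exact D_pos (Real.cos Θi) (Real.cos Θj) (Real.cos Θk) ri rj rk hIi hIi1 hIj hIj1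
      hIk hIk1 hξi hξj hξk hri hrj hrk
  have hq1 : A < lj * lk := by nlinarith
  have hq2 : -(lj * lk) < A := by nlinarith
  have hkey : 0 < A + Real.cos Θi * (lj * lk) := by
    have := key_ineq (Real.cos Θi) (Real.cos Θj) (Real.cos Θk) ri rj rk lj lk hIi hIi1
      hIj hIj1 hIk hIk1 hξi hξj hξk hri hrj hrk hlj hlk hsqj hsqk
    linarith [this]
  constructor
  · rw [hAngle]
    exact Real.arccos_pos.2 ((div_lt_one hP).2 hq1)
  · rw [hAngle]
    have h1 : A / (lj * lk) < 1 := (div_lt_one hP).2 hq1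
    have h1' : -1 < A / (lj * lk) := by
      rw [lt_div_iff₀ hP]
      linarith
    have h2 : -Real.cos Θi < A / (lj * lk) := by
      rw [lt_div_iff₀ hP]
      linarith
    calc arccos (A / (lj * lk)) < arccos (-Real.cos Θi) :=
        Real.strictAntiOn_arccos ⟨by linarith, by linarith⟩ ⟨h1'.le, h1.le⟩ h2
      _ = Real.pi - Θi := by rw [Real.arccos_neg, Real.arccos_cos hi0 hi1.le]

theorem stmt_9 (Θi Θj Θk : ℝ)
    (hi0 : 0 ≤ Θi) (hi1 : Θi < Real.pi)
    (hj0 : 0 ≤ Θj) (hj1 : Θj < Real.pi)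
    (hk0 : 0 ≤ Θk) (hk1 : Θk < Real.pi)
    (hξi : 0 ≤ Real.cos Θi + Real.cos Θj * Real.cos Θk)
    (hξj : 0 ≤ Real.cos Θj + Real.cos Θk * Real.cos Θi)
    (hξk : 0 ≤ Real.cos Θk + Real.cos Θi * Real.cos Θj)
    (ri rj rk : ℝ) (hri : 0 < ri) (hrj : 0 < rj) (hrk : 0 < rk) :
    (0 < eucAngle (Real.cos Θi) (Real.cos Θj) (Real.cos Θk) ri rj rk ∧
      eucAngle (Real.cos Θi) (Real.cos Θj) (Real.cos Θk) ri rj rk < Real.pi - Θi) ∧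
    (0 < eucAngle (Real.cos Θj) (Real.cos Θk) (Real.cos Θi) rj rk ri ∧
      eucAngle (Real.cos Θj) (Real.cos Θk) (Real.cos Θi) rj rk ri < Real.pi - Θj) ∧
    (0 < eucAngle (Real.cos Θk) (Real.cos Θi) (Real.cos Θj) rk ri rj ∧
      eucAngle (Real.cos Θk) (Real.cos Θi) (Real.cos Θj) rk ri rj < Real.pi - Θk) ∧
    eucAngle (Real.cos Θi) (Real.cos Θj) (Real.cos Θk) ri rj rk
      + eucAngle (Real.cos Θj) (Real.cos Θk) (Real.cos Θi) rj rk ri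
      + eucAngle (Real.cos Θk) (Real.cos Θi) (Real.cos Θj) rk ri rj = Real.pi := by
  have hIi : -1 < Real.cos Θi := by
    have := Real.cos_lt_cos_of_nonneg_of_le_pi hi0 le_rfl hi1
    rwa [Real.cos_pi] at this
  have hIj : -1 < Real.cos Θj := by
    have := Real.cos_lt_cos_of_nonneg_of_le_pi hj0 le_rfl hj1
    rwa [Real.cos_pi] at this
  have hIk : -1 < Real.cos Θk := by
    have := Real.cos_lt_cos_of_nonneg_of_le_pi hk0 le_rfl hk1
    rwa [Real.cos_pi] at this
  have hIi1 := Real.cos_le_one Θi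
  have hIj1 := Real.cos_le_one Θj
  have hIk1 := Real.cos_le_one Θk
  have hli : 0 < eucLen (Real.cos Θi) rj rk := eucLen_pos hIi hrj hrk
  have hlj : 0 < eucLen (Real.cos Θj) rk ri := eucLen_pos hIj hrk hri
  have hlk : 0 < eucLen (Real.cos Θk) ri rj := eucLen_pos hIk hri hrj
  have hsqi := eucLen_sq hIi hrj hrk
  have hsqj := eucLen_sq hIj hrk hri
  have hsqk := eucLen_sq hIk hri hrj
  refine ⟨one_angle Θi Θj Θk hi0 hi1 hj0 hj1 hk0 hk1 hξi hξj hξk ri rj rk hri hrj hrk,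
    one_angle Θj Θk Θi hj0 hj1 hk0 hk1 hi0 hi1 hξj hξk hξi rj rk ri hrj hrk hri,
    one_angle Θk Θi Θj hk0 hk1 hi0 hi1 hj0 hj1 hξk hξi hξj rk ri rj hrk hri hrj, ?_⟩
  have hD : ((eucLen (Real.cos Θj) rk ri ^ 2 + eucLen (Real.cos Θk) ri rj ^ 2 -
      eucLen (Real.cos Θi) rj rk ^ 2) / 2) ^ 2 <
      eucLen (Real.cos Θj) rk ri ^ 2 * eucLen (Real.cos Θk) ri rj ^ 2 := by
    rw [hsqi, hsqj, hsqk]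
    have := D_pos (Real.cos Θi) (Real.cos Θj) (Real.cos Θk) ri rj rk hIi hIi1 hIj hIj1
      hIk hIk1 hξi hξj hξk hri hrj hrk
    nlinarith [this]
  have := triangle_sum (eucLen (Real.cos Θi) rj rk) (eucLen (Real.cos Θj) rk ri)
    (eucLen (Real.cos Θk) ri rj) hli hlj hlk hD
  unfold eucAngle
  convert this using 3 <;> ring
end

section
/- Assume ξ_i ≥ 0, ξ_j ≥ 0, ξ_k ≥ 0, and let c be a positive real. Then the sum of Euclidean inner angles ϑ_i(r_i, r_j, r_k) + ϑ_j(r_i, r_j, r_k) tends to π (equivalently, ϑ_k tends to 0) as (r_i, r_j, r_k) tends to (0, 0, c) within the open positive octant (0,∞)³. -/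
open Real EuclideanGeometry

lemma eucLen_arg_pos_s12 {I r s : ℝ} (hI : -1 < I) (hr : 0 < r) (hs : 0 < s) :
    0 < r ^ 2 + s ^ 2 + 2 * I * r * s := by
  nlinarith [sq_nonneg (r - s), mul_pos hr hs]

lemma eucLen_pos_s12 {I r s : ℝ} (hI : -1 < I) (hr : 0 < r) (hs : 0 < s) :
    0 < eucLen I r s :=
  Real.sqrt_pos.2 (eucLen_arg_pos_s12 hI hr hs)

lemma eucLen_sq_s12 {I r s : ℝ} (hI : -1 < I) (hr : 0 < r) (hs : 0 < s) :
    eucLen I r s ^ 2 = r ^ 2 + s ^ 2 + 2 * I * r * s :=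
  Real.sq_sqrt (eucLen_arg_pos_s12 hI hr hs).le

lemma continuous_eucLen3 {I : ℝ} {f g : ℝ × ℝ × ℝ → ℝ} (hf : Continuous f)
    (hg : Continuous g) : Continuous (fun p => eucLen I (f p) (g p)) := by
  unfold eucLen
  exact Real.continuous_sqrt.comp (by fun_prop)

lemma triangle_arccos_sum (a b c : ℝ) (ha : 0 < a) (hb : 0 < b) (hc : 0 < c)
    (h : (b ^ 2 + c ^ 2 - a ^ 2) ^ 2 ≤ (2 * b * c) ^ 2) :
    Real.arccos ((b ^ 2 + c ^ 2 - a ^ 2) / (2 * b * c))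
      + Real.arccos ((c ^ 2 + a ^ 2 - b ^ 2) / (2 * c * a))
      + Real.arccos ((a ^ 2 + b ^ 2 - c ^ 2) / (2 * a * b)) = Real.pi := by
  set x : ℝ := (c ^ 2 + b ^ 2 - a ^ 2) / (2 * c) with hx
  have hx2 : x ^ 2 ≤ b ^ 2 := by
    rw [hx, div_pow, div_le_iff₀ (by positivity)]
    nlinarith
  set y : ℝ := Real.sqrt (b ^ 2 - x ^ 2) with hy
  have hy2 : y ^ 2 = b ^ 2 - x ^ 2 := Real.sq_sqrt (by linarith)
  set A : EuclideanSpace ℝ (Fin 2) := !₂[0, 0] with hA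
  set B : EuclideanSpace ℝ (Fin 2) := !₂[c, 0] with hB
  set C : EuclideanSpace ℝ (Fin 2) := !₂[x, y] with hC
  have hAB : dist A B = c := by
    rw [EuclideanSpace.dist_eq]
    simp only [hA, hB, Fin.sum_univ_two, PiLp.toLp_apply, Matrix.cons_val_zero, Matrix.cons_val_one,
      Matrix.head_cons, Real.dist_eq, sq_abs]
    rw [show (0 - c) ^ 2 + (0 - 0) ^ 2 = c ^ 2 by ring, Real.sqrt_sq hc.le]
  have hAC : dist A C = b := by
    rw [EuclideanSpace.dist_eq]
    simp only [hA, hC, Fin.sum_univ_two, PiLp.toLp_apply, Matrix.cons_val_zero, Matrix.cons_val_one,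
      Matrix.head_cons, Real.dist_eq, sq_abs]
    rw [show (0 - x) ^ 2 + (0 - y) ^ 2 = x ^ 2 + y ^ 2 by ring, hy2,
      show x ^ 2 + (b ^ 2 - x ^ 2) = b ^ 2 by ring, Real.sqrt_sq hb.le]
  have hBC : dist B C = a := by
    rw [EuclideanSpace.dist_eq]
    simp only [hB, hC, Fin.sum_univ_two, PiLp.toLp_apply, Matrix.cons_val_zero, Matrix.cons_val_one,
      Matrix.head_cons, Real.dist_eq, sq_abs]
    rw [show (c - x) ^ 2 + (0 - y) ^ 2 = c ^ 2 - 2 * c * x + x ^ 2 + y ^ 2 by ring, hy2]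
    rw [show c ^ 2 - 2 * c * x + x ^ 2 + (b ^ 2 - x ^ 2) = c ^ 2 + b ^ 2 - 2 * c * x by ring]
    rw [hx, show c ^ 2 + b ^ 2 - 2 * c * ((c ^ 2 + b ^ 2 - a ^ 2) / (2 * c)) = a ^ 2 by
      field_simp; ring]
    exact Real.sqrt_sq ha.le
  have hABne : A ≠ B := by
    intro h'; rw [h', dist_self] at hAB; exact hc.ne hAB
  have hCBne : C ≠ B := by
    intro h'; rw [h'] at hBC; rw [dist_comm, dist_self] at hBC; exact ha.ne hBC
  have hsum := EuclideanGeometry.angle_add_angle_add_angle_eq_pi (p₁ := B) C hABne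
  have l1 := EuclideanGeometry.law_cos B A C
  have l2 := EuclideanGeometry.law_cos A B C
  have l3 := EuclideanGeometry.law_cos A C B
  rw [EuclideanGeometry.angle_comm C B A] at hsum
  simp only [dist_comm B A, dist_comm C A, dist_comm C B, hAB, hAC, hBC] at l1 l2 l3
  have n1 := EuclideanGeometry.angle_nonneg B A C
  have p1 := EuclideanGeometry.angle_le_pi B A C
  have n2 := EuclideanGeometry.angle_nonneg A B C
  have p2 := EuclideanGeometry.angle_le_pi A B C
  have n3 := EuclideanGeometry.angle_nonneg A C B
  have p3 := EuclideanGeometry.angle_le_pi A C B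
  generalize hα : ∠ B A C = α at l1 hsum n1 p1
  generalize hβ : ∠ A B C = β at l2 hsum n2 p2
  generalize hγ : ∠ A C B = γ at l3 hsum n3 p3
  clear hα hβ hγ hAB hAC hBC hABne hCBne hA hB hC hy hy2 hx hx2 A B C x y
  have e1 : (b ^ 2 + c ^ 2 - a ^ 2) / (2 * b * c) = Real.cos α := by
    rw [div_eq_iff (by positivity)]; linear_combination -l1
  have e2 : (c ^ 2 + a ^ 2 - b ^ 2) / (2 * c * a) = Real.cos β := by
    rw [div_eq_iff (by positivity)]; linear_combination -l2
  have e3 : (a ^ 2 + b ^ 2 - c ^ 2) / (2 * a * b) = Real.cos γ := by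
    rw [div_eq_iff (by positivity)]; linear_combination -l3
  rw [e1, e2, e3, Real.arccos_cos n1 p1, Real.arccos_cos n2 p2, Real.arccos_cos n3 p3]
  linarith

lemma one_sub_sq_nonneg {t : ℝ} (h1 : -1 < t) (h2 : t ≤ 1) : (0 : ℝ) ≤ 1 - t ^ 2 := by
  nlinarith

lemma eucAngle_key {Ii Ij Ik : ℝ} (hIi : -1 < Ii) (hIj : -1 < Ij) (hIk : -1 < Ik)
    (hIi1 : Ii ≤ 1) (hIj1 : Ij ≤ 1) (hIk1 : Ik ≤ 1)
    (hξi : 0 ≤ Ii + Ij * Ik) (hξj : 0 ≤ Ij + Ik * Ii) (hξk : 0 ≤ Ik + Ii * Ij)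
    {ri rj rk : ℝ} (hp1 : 0 < ri) (hp2 : 0 < rj) (hp3 : 0 < rk) :
    eucAngle Ii Ij Ik ri rj rk + eucAngle Ij Ik Ii rj rk ri
      = Real.pi - Real.arccos ((eucLen Ii rj rk ^ 2 + eucLen Ij rk ri ^ 2
          - eucLen Ik ri rj ^ 2) / (2 * eucLen Ii rj rk * eucLen Ij rk ri)) := by
  have hpa : 0 < eucLen Ii rj rk := eucLen_pos_s12 hIi hp2 hp3
  have hpb : 0 < eucLen Ij rk ri := eucLen_pos_s12 hIj hp3 hp1
  have hpd : 0 < eucLen Ik ri rj := eucLen_pos_s12 hIk hp1 hp2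
  have sa := eucLen_sq_s12 hIi hp2 hp3
  have sb := eucLen_sq_s12 hIj hp3 hp1
  have sd := eucLen_sq_s12 hIk hp1 hp2
  have hkey : (eucLen Ij rk ri ^ 2 + eucLen Ik ri rj ^ 2 - eucLen Ii rj rk ^ 2) ^ 2
      ≤ (2 * eucLen Ij rk ri * eucLen Ik ri rj) ^ 2 := by
    rw [show (2 * eucLen Ij rk ri * eucLen Ik ri rj) ^ 2
        = 4 * (eucLen Ij rk ri ^ 2 * eucLen Ik ri rj ^ 2) by ring, sa, sb, sd]
    nlinarith [mul_nonneg (mul_nonneg hξi (sq_nonneg ri)) (mul_pos hp2 hp3).le,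
      mul_nonneg (mul_nonneg hξj (sq_nonneg rj)) (mul_pos hp3 hp1).le,
      mul_nonneg (mul_nonneg hξk (sq_nonneg rk)) (mul_pos hp1 hp2).le,
      mul_nonneg (one_sub_sq_nonneg hIi hIi1) (sq_nonneg (rj * rk)),
      mul_nonneg (one_sub_sq_nonneg hIj hIj1) (sq_nonneg (rk * ri)),
      mul_nonneg (one_sub_sq_nonneg hIk hIk1) (sq_nonneg (ri * rj))]
  have hsum := triangle_arccos_sum (eucLen Ii rj rk) (eucLen Ij rk ri) (eucLen Ik ri rj)
    hpa hpb hpd hkey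
  rw [eucAngle, eucAngle]
  linarith [hsum]

theorem stmt_12 (Θi Θj Θk : ℝ)
    (hi0 : 0 ≤ Θi) (hi1 : Θi < Real.pi)
    (hj0 : 0 ≤ Θj) (hj1 : Θj < Real.pi)
    (hk0 : 0 ≤ Θk) (hk1 : Θk < Real.pi)
    (hξi : 0 ≤ Real.cos Θi + Real.cos Θj * Real.cos Θk)
    (hξj : 0 ≤ Real.cos Θj + Real.cos Θk * Real.cos Θi)
    (hξk : 0 ≤ Real.cos Θk + Real.cos Θi * Real.cos Θj)
    (c : ℝ) (hc : 0 < c) :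
    Filter.Tendsto
      (fun p : ℝ × ℝ × ℝ =>
        eucAngle (Real.cos Θi) (Real.cos Θj) (Real.cos Θk) p.1 p.2.1 p.2.2
          + eucAngle (Real.cos Θj) (Real.cos Θk) (Real.cos Θi) p.2.1 p.2.2 p.1)
      (nhdsWithin (0, 0, c) (Set.Ioi 0 ×ˢ Set.Ioi 0 ×ˢ Set.Ioi 0))
      (nhds Real.pi) := by
  set Ii := Real.cos Θi with hIidef
  set Ij := Real.cos Θj with hIjdef
  set Ik := Real.cos Θk with hIkdef
  have hIi : -1 < Ii := by
    rw [hIidef, show (-1 : ℝ) = Real.cos Real.pi by simp]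
    exact Real.cos_lt_cos_of_nonneg_of_le_pi hi0 le_rfl hi1
  have hIj : -1 < Ij := by
    rw [hIjdef, show (-1 : ℝ) = Real.cos Real.pi by simp]
    exact Real.cos_lt_cos_of_nonneg_of_le_pi hj0 le_rfl hj1
  have hIk : -1 < Ik := by
    rw [hIkdef, show (-1 : ℝ) = Real.cos Real.pi by simp]
    exact Real.cos_lt_cos_of_nonneg_of_le_pi hk0 le_rfl hk1
  have hIi1 : Ii ≤ 1 := Real.cos_le_one _
  have hIj1 : Ij ≤ 1 := Real.cos_le_one _
  have hIk1 : Ik ≤ 1 := Real.cos_le_one _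
  set g : ℝ × ℝ × ℝ → ℝ := fun p =>
    Real.arccos ((eucLen Ii p.2.1 p.2.2 ^ 2 + eucLen Ij p.2.2 p.1 ^ 2
        - eucLen Ik p.1 p.2.1 ^ 2) /
      (2 * eucLen Ii p.2.1 p.2.2 * eucLen Ij p.2.2 p.1)) with hgdef
  have hgt : Filter.Tendsto g
      (nhdsWithin (0, 0, c) (Set.Ioi 0 ×ˢ Set.Ioi 0 ×ˢ Set.Ioi 0)) (nhds 0) := by
    have h1 : eucLen Ii (0 : ℝ) c = c := by
      unfold eucLen
      rw [show (0 : ℝ) ^ 2 + c ^ 2 + 2 * Ii * 0 * c = c ^ 2 by ring, Real.sqrt_sq hc.le]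
    have h2 : eucLen Ij c (0 : ℝ) = c := by
      unfold eucLen
      rw [show c ^ 2 + (0 : ℝ) ^ 2 + 2 * Ij * c * 0 = c ^ 2 by ring, Real.sqrt_sq hc.le]
    have h3 : eucLen Ik (0 : ℝ) (0 : ℝ) = 0 := by
      unfold eucLen
      rw [show (0 : ℝ) ^ 2 + (0 : ℝ) ^ 2 + 2 * Ik * 0 * 0 = 0 by ring, Real.sqrt_zero]
    have ca : Continuous (fun p : ℝ × ℝ × ℝ => eucLen Ii p.2.1 p.2.2) :=
      continuous_eucLen3 (by fun_prop) (by fun_prop)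
    have cb : Continuous (fun p : ℝ × ℝ × ℝ => eucLen Ij p.2.2 p.1) :=
      continuous_eucLen3 (by fun_prop) (by fun_prop)
    have cc : Continuous (fun p : ℝ × ℝ × ℝ => eucLen Ik p.1 p.2.1) :=
      continuous_eucLen3 (by fun_prop) (by fun_prop)
    have hq : ContinuousAt (fun p : ℝ × ℝ × ℝ =>
        (eucLen Ii p.2.1 p.2.2 ^ 2 + eucLen Ij p.2.2 p.1 ^ 2 - eucLen Ik p.1 p.2.1 ^ 2) /
          (2 * eucLen Ii p.2.1 p.2.2 * eucLen Ij p.2.2 p.1)) ((0 : ℝ), (0 : ℝ), c) := by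
      apply ContinuousAt.div
      · exact (((ca.pow 2).add (cb.pow 2)).sub (cc.pow 2)).continuousAt
      · exact ((continuous_const.mul ca).mul cb).continuousAt
      · show 2 * eucLen Ii (0 : ℝ) c * eucLen Ij c (0 : ℝ) ≠ 0
        rw [h1, h2]; positivity
    have hcg : ContinuousAt g ((0 : ℝ), (0 : ℝ), c) :=
      Real.continuous_arccos.continuousAt.comp hq
    have hval : g ((0 : ℝ), (0 : ℝ), c) = 0 := by
      rw [hgdef]
      simp only [h1, h2, h3]
      rw [show (c ^ 2 + c ^ 2 - (0 : ℝ) ^ 2) / (2 * c * c) = 1 by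
        field_simp; ring]
      exact Real.arccos_one
    have ht := (hcg.continuousWithinAt
      (s := Set.Ioi 0 ×ˢ Set.Ioi 0 ×ˢ Set.Ioi 0)).tendsto
    rwa [hval] at ht
  refine Filter.Tendsto.congr' (f₁ := fun p => Real.pi - g p) ?_ ?_
  · filter_upwards [self_mem_nhdsWithin] with p hp
    obtain ⟨hp1, hp2, hp3⟩ := hp
    rw [Set.mem_Ioi] at hp1 hp2 hp3
    exact (eucAngle_key hIi hIj hIk hIi1 hIj1 hIk1 hξi hξj hξk hp1 hp2 hp3).symm
  · have := hgt.const_sub Real.pi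
    simpa using this
end
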